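/- Assume 𝒢 is connected and let λ₁ = min_{f ∈ 𝒮_p} ℛ(f) be the first variational eigenvalue of ℋ_p. Then every eigenfunction of ℋ_p associated with λ₁ is either strictly positive at every vertex or strictly negative at every vertex, and λ₁ is simple: any two eigenfunctions of ℋ_p associated with λ₁ are scalar multiples of each other. -/

import Mathlib

noncomputable section

open Finset

/-- `φ_p(x) = |x|^{p-2} x` (real exponent, `φ_p(0) = 0`). -/
def phiP (p x : ℝ) : ℝ := |x| ^ (p - 2) * x

/-- The generalized `p`-Laplacian `ℋ_p`.  The edge-weight function `ω` is assumed to be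
symmetric and to vanish on pairs of non-adjacent vertices, so the sum over all vertices
is the sum over the neighbours of `u`. -/
def genLap {V : Type*} [Fintype V] (ω : V → V → ℝ) (κ : V → ℝ) (p : ℝ)
    (f : V → ℝ) (u : V) : ℝ :=
  (∑ v : V, ω u v * phiP p (f u - f v)) + κ u * phiP p (f u)

/-- `(lam, f)` is an eigenpair of `ℋ_p`. -/
def IsEigenpair {V : Type*} [Fintype V] (ω : V → V → ℝ) (κ ϱ : V → ℝ) (p lam : ℝ)
    (f : V → ℝ) : Prop :=
  f ≠ 0 ∧ ∀ u, genLap ω κ p f u = lam * (ϱ u * phiP p (f u))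

/-- The Rayleigh quotient `ℛ` of `ℋ_p` (each edge `uv` is counted once: the double sum
counts it twice, whence the factor `1/2`). -/
def rayleigh {V : Type*} [Fintype V] (ω : V → V → ℝ) (κ ϱ : V → ℝ) (p : ℝ)
    (f : V → ℝ) : ℝ :=
  ((1 / 2) * ∑ u : V, ∑ v : V, ω u v * |f u - f v| ^ p + ∑ u : V, κ u * |f u| ^ p) /
    ∑ u : V, ϱ u * |f u| ^ p

/-- The `p`-sphere `𝒮_p`. -/
def pSphere (V : Type*) [Fintype V] (p : ℝ) : Set (V → ℝ) := {f | ∑ u : V, |f u| ^ p = 1}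

/-- The Krasnoselskii genus of a (symmetric) subset of `ℝ^V`. -/
def krasGenus {V : Type*} [Fintype V] (A : Set (V → ℝ)) : ℕ∞ :=
  sInf {n : ℕ∞ | ∃ k : ℕ, n = (k : ℕ∞) ∧ ∃ φ : (V → ℝ) → (Fin k → ℝ),
    ContinuousOn φ A ∧ (∀ x ∈ A, φ (-x) = -φ x) ∧ ∀ x ∈ A, φ x ≠ 0}

/-- The `k`-th variational eigenvalue of `ℋ_p`: the min over closed symmetric subsets of the
`p`-sphere of genus at least `k` of the max of the Rayleigh quotient. -/
def varEig {V : Type*} [Fintype V] (ω : V → V → ℝ) (κ ϱ : V → ℝ) (p : ℝ) (k : ℕ) : ℝ :=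
  sInf {r : ℝ | ∃ A : Set (V → ℝ), A ⊆ pSphere V p ∧ IsClosed A ∧ (∀ f ∈ A, -f ∈ A) ∧
    (k : ℕ∞) ≤ krasGenus A ∧ IsGreatest (rayleigh ω κ ϱ p '' A) r}

/-- The subgraph `𝒢₊(f)`: vertices where `f ≠ 0`, edges where `f` has equal nonzero signs. -/
def posGraph {V : Type*} (G : SimpleGraph V) (f : V → ℝ) : SimpleGraph V where
  Adj u v := G.Adj u v ∧ 0 < f u * f v
  symm := by
    refine ⟨fun u v h => ?_⟩
    exact ⟨h.1.symm, by rw [mul_comm]; exact h.2⟩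
  loopless := ⟨fun u h => G.loopless.irrefl u h.1⟩

/-- The number `ν(f)` of (strong) nodal domains of `f`: the number of connected components of
`𝒢₊(f)` consisting of vertices where `f` is nonzero. -/
def nodalCount {V : Type*} (G : SimpleGraph V) (f : V → ℝ) : ℕ :=
  {c : (posGraph G f).ConnectedComponent |
    ∀ u, (posGraph G f).connectedComponentMk u = c → f u ≠ 0}.ncard

/-- The subgraph of edges on which `f` changes sign. -/
def negGraph {V : Type*} (G : SimpleGraph V) (f : V → ℝ) : SimpleGraph V where
  Adj u v := G.Adj u v ∧ f u * f v < 0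
  symm := by
    refine ⟨fun u v h => ?_⟩
    exact ⟨h.1.symm, by rw [mul_comm]; exact h.2⟩
  loopless := ⟨fun u h => G.loopless.irrefl u h.1⟩

/-- `ζ(f)`: the number of edges on which `f` changes sign. -/
def zetaCount {V : Type*} [Fintype V] (G : SimpleGraph V) (f : V → ℝ) : ℕ :=
  (negGraph G f).edgeSet.ncard

/-- `z(f)`: the number of vertices where `f` vanishes. -/
def zeroCount {V : Type*} [Fintype V] (f : V → ℝ) : ℕ := {u : V | f u = 0}.ncard

/-- `l(f)`: the number of independent loops (cycle rank) of `𝒢₊(f)`,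
`|E(𝒢₊(f))| − |V(𝒢₊(f))| + ν(f)`. -/
def loopCount {V : Type*} [Fintype V] (G : SimpleGraph V) (f : V → ℝ) : ℤ :=
  ((posGraph G f).edgeSet.ncard : ℤ) - ({u : V | f u ≠ 0}.ncard : ℤ) + (nodalCount G f : ℤ)

/-- The subgraph `𝒢'(f)` of `𝒢` induced on the support of `f` (vertices with `f = 0` are
deleted together with all incident edges; in this encoding they are kept as isolated
vertices, which are discarded in the counts below). -/
def suppGraph {V : Type*} (G : SimpleGraph V) (f : V → ℝ) : SimpleGraph V where
  Adj u v := G.Adj u v ∧ f u ≠ 0 ∧ f v ≠ 0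
  symm := by
    refine ⟨fun u v h => ?_⟩
    exact ⟨h.1.symm, h.2.2, h.2.1⟩
  loopless := ⟨fun u h => G.loopless.irrefl u h.1⟩

/-- `c(f)`: the number of connected components of `𝒢'(f)`. -/
def compCount {V : Type*} (G : SimpleGraph V) (f : V → ℝ) : ℕ :=
  {c : (suppGraph G f).ConnectedComponent |
    ∀ u, (suppGraph G f).connectedComponentMk u = c → f u ≠ 0}.ncard

/-- `β'(f)`: the number of independent loops of `𝒢'(f)`,
`|E(𝒢'(f))| − |V(𝒢'(f))| + c(f)`. -/
def betaSupp {V : Type*} [Fintype V] (G : SimpleGraph V) (f : V → ℝ) : ℤ :=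
  ((suppGraph G f).edgeSet.ncard : ℤ) - ({u : V | f u ≠ 0}.ncard : ℤ) + (compCount G f : ℤ)


section AuxPhi
variable {p : ℝ}


lemma phiP_zero : phiP p 0 = 0 := by simp [phiP]

lemma phiP_neg (x : ℝ) : phiP p (-x) = - phiP p x := by
  simp [phiP]

lemma phiP_of_pos {x : ℝ} (hx : 0 < x) : phiP p x = x ^ (p - 1) := by
  rw [phiP, abs_of_pos hx]
  rw [show x ^ (p-2) * x = x ^ (p-2) * x ^ (1:ℝ) by rw [Real.rpow_one],
    ← Real.rpow_add hx]
  ring_nf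

lemma phiP_nonneg_of_nonneg {x : ℝ} (hx : 0 ≤ x) : 0 ≤ phiP p x := by
  rcases eq_or_lt_of_le hx with h | h
  · rw [← h, phiP_zero]
  · rw [phiP_of_pos h]; positivity

lemma phiP_strictMono (hp : 1 < p) : StrictMono (phiP p) := by
  have h1 : ∀ x : ℝ, 0 < x → 0 < phiP p x := by
    intro x hx; rw [phiP_of_pos hx]; positivity
  have key : ∀ a b : ℝ, 0 ≤ a → a < b → phiP p a < phiP p b := by
    intro a b ha hab
    rcases eq_or_lt_of_le ha with h | h
    · rw [← h, phiP_zero]; exact h1 b (h ▸ hab)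
    · rw [phiP_of_pos h, phiP_of_pos (h.trans hab)]
      exact Real.rpow_lt_rpow h.le hab (by linarith)
  intro a b hab
  rcases le_or_gt 0 a with ha | ha
  · exact key a b ha hab
  · rcases le_or_gt 0 b with hb | hb
    · have : phiP p a < 0 := by
        have := h1 (-a) (by linarith)
        rw [phiP_neg] at this; linarith
      rcases eq_or_lt_of_le hb with h | h
      · rw [← h, phiP_zero]; exact this
      · exact this.trans (h1 b h)
    · have := key (-b) (-a) (by linarith) (by linarith)
      rw [phiP_neg, phiP_neg] at this; linarith

lemma phiP_mul_self (hp : 1 < p) (x : ℝ) : phiP p x * x = |x| ^ p := by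
  rcases eq_or_ne x 0 with rfl | hx
  · rw [phiP_zero, zero_mul, abs_zero, Real.zero_rpow (by linarith)]
  · have hax : (0:ℝ) < |x| := abs_pos.mpr hx
    rw [phiP, mul_assoc]
    have : x * x = |x| ^ (2:ℝ) := by
      rw [show ((2:ℝ)) = ((2:ℕ):ℝ) by norm_num, Real.rpow_natCast, sq_abs, sq]
    rw [this, ← Real.rpow_add hax]
    norm_num


lemma phiP_const_mul (hp : 1 < p) {c : ℝ} (hc : 0 < c) (x : ℝ) :
    phiP p (c * x) = c ^ (p - 1) * phiP p x := by
  rw [phiP, phiP, abs_mul, abs_of_pos hc, Real.mul_rpow hc.le (abs_nonneg x)]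
  rw [show c ^ (p-2) * |x| ^ (p-2) * (c * x) = (c ^ (p-2) * c ^ (1:ℝ)) * (|x| ^ (p-2) * x) by
    rw [Real.rpow_one]; ring, ← Real.rpow_add hc]
  ring_nf

end AuxPhi

section AuxMain
variable {V : Type*} [Fintype V] {G : SimpleGraph V} {ω : V → V → ℝ} {κ ϱ : V → ℝ} {p : ℝ}

/-- Numerator of the Rayleigh quotient. -/
def NumQ (ω : V → V → ℝ) (κ : V → ℝ) (p : ℝ) (f : V → ℝ) : ℝ :=
  (1 / 2) * ∑ u : V, ∑ v : V, ω u v * |f u - f v| ^ p + ∑ u : V, κ u * |f u| ^ p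

/-- Denominator of the Rayleigh quotient. -/
def DenQ (ϱ : V → ℝ) (p : ℝ) (f : V → ℝ) : ℝ := ∑ u : V, ϱ u * |f u| ^ p

lemma rayleigh_eq (f : V → ℝ) :
    rayleigh ω κ ϱ p f = NumQ ω κ p f / DenQ ϱ p f := rfl


lemma denQ_pos (hϱpos : ∀ u, 0 < ϱ u) {f : V → ℝ} (hf : f ≠ 0) : 0 < DenQ ϱ p f := by
  obtain ⟨u, hu⟩ := Function.ne_iff.mp hf
  refine Finset.sum_pos' (fun v _ => ?_) ⟨u, mem_univ u, ?_⟩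
  · have := (hϱpos v).le
    positivity
  · exact mul_pos (hϱpos u) (Real.rpow_pos_of_pos (abs_pos.mpr hu) p)

lemma denQ_nonneg (hϱpos : ∀ u, 0 < ϱ u) (f : V → ℝ) : 0 ≤ DenQ ϱ p f := by
  refine Finset.sum_nonneg fun v _ => ?_
  have := (hϱpos v).le
  positivity

/-- Scale invariance of the Rayleigh quotient. -/
lemma rayleigh_smul {c : ℝ} (hc : c ≠ 0) (f : V → ℝ) :
    rayleigh ω κ ϱ p (c • f) = rayleigh ω κ ϱ p f := by
  have habs : ∀ x : ℝ, |c * x| ^ p = |c| ^ p * |x| ^ p := by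
    intro x
    rw [abs_mul, Real.mul_rpow (abs_nonneg c) (abs_nonneg x)]
  have hcp : (0:ℝ) < |c| ^ p := Real.rpow_pos_of_pos (abs_pos.mpr hc) p
  rw [rayleigh_eq, rayleigh_eq]
  have hnum : NumQ ω κ p (c • f) = |c| ^ p * NumQ ω κ p f := by
    unfold NumQ
    have h1 : ∑ u : V, ∑ v : V, ω u v * |(c • f) u - (c • f) v| ^ p
        = |c| ^ p * ∑ u : V, ∑ v : V, ω u v * |f u - f v| ^ p := by
      rw [Finset.mul_sum]
      refine Finset.sum_congr rfl fun u _ => ?_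
      rw [Finset.mul_sum]
      refine Finset.sum_congr rfl fun v _ => ?_
      have : (c • f) u - (c • f) v = c * (f u - f v) := by simp [mul_sub]
      rw [this, habs]; ring
    have h2 : ∑ u : V, κ u * |(c • f) u| ^ p = |c| ^ p * ∑ u : V, κ u * |f u| ^ p := by
      rw [Finset.mul_sum]
      refine Finset.sum_congr rfl fun u _ => ?_
      have : (c • f) u = c * f u := rfl
      rw [this, habs]; ring
    rw [h1, h2]; ring
  have hden : DenQ ϱ p (c • f) = |c| ^ p * DenQ ϱ p f := by
    unfold DenQ
    rw [Finset.mul_sum]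
    refine Finset.sum_congr rfl fun u _ => ?_
    have : (c • f) u = c * f u := rfl
    rw [this, habs]; ring
  rw [hnum, hden, mul_div_mul_left _ _ hcp.ne']

/-- λ₁ is a lower bound for the Rayleigh quotient on all nonzero functions. -/
lemma lam1_le_rayleigh (hp : 1 < p) {lam1 : ℝ}
    (hlam1 : IsLeast (rayleigh ω κ ϱ p '' pSphere V p) lam1)
    {f : V → ℝ} (hf : f ≠ 0) : lam1 ≤ rayleigh ω κ ϱ p f := by
  have hp0 : p ≠ 0 := by linarith
  set S : ℝ := ∑ u : V, |f u| ^ p with hS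
  have hSpos : 0 < S := by
    obtain ⟨u, hu⟩ := Function.ne_iff.mp hf
    refine Finset.sum_pos' (fun v _ => by positivity) ⟨u, mem_univ u, ?_⟩
    exact Real.rpow_pos_of_pos (abs_pos.mpr hu) p
  set c : ℝ := S ^ (-(1/p)) with hc
  have hcpos : 0 < c := Real.rpow_pos_of_pos hSpos _
  have hmem : (c • f) ∈ pSphere V p := by
    show (∑ u : V, |(c • f) u| ^ p) = 1
    have : ∀ u, |(c • f) u| ^ p = c ^ p * |f u| ^ p := by
      intro u
      have : (c • f) u = c * f u := rfl
      rw [this, abs_mul, abs_of_pos hcpos, Real.mul_rpow hcpos.le (abs_nonneg _)]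
    simp_rw [this]
    rw [← Finset.mul_sum, ← hS, hc, ← Real.rpow_mul hSpos.le,
      show (-(1/p))*p = -1 by field_simp, Real.rpow_neg_one, inv_mul_cancel₀ hSpos.ne']
  have := hlam1.2 ⟨c • f, hmem, rfl⟩
  rwa [rayleigh_smul hcpos.ne'] at this

/-- For an eigenpair, the numerator equals λ times the denominator. -/
lemma eig_num_eq (hp : 1 < p) (hωsymm : ∀ u v, ω u v = ω v u) {lam : ℝ} {f : V → ℝ}
    (hf : IsEigenpair ω κ ϱ p lam f) : NumQ ω κ p f = lam * DenQ ϱ p f := by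
  have hsum : ∀ u : V, (∑ v : V, ω u v * phiP p (f u - f v) * f u) + κ u * |f u| ^ p
      = lam * (ϱ u * |f u| ^ p) := by
    intro u
    have := congrArg (· * f u) (hf.2 u)
    simp only [genLap] at this
    rw [add_mul, Finset.sum_mul] at this
    have e1 := phiP_mul_self hp (f u)
    linear_combination this + (lam * ϱ u - κ u) * e1
  -- T = ∑∑ ω φ(fu-fv) fu
  set T : ℝ := ∑ u : V, ∑ v : V, ω u v * phiP p (f u - f v) * f u with hT
  set T2 : ℝ := ∑ u : V, ∑ v : V, ω u v * phiP p (f u - f v) * f v with hT2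
  have hTT2 : T = -T2 := by
    have h2 : ∑ a : V, ∑ b : V, -(ω a b * phiP p (f a - f b) * f b) = -T2 := by
      simp [hT2, Finset.sum_neg_distrib]
    calc T = ∑ v : V, ∑ u : V, ω u v * phiP p (f u - f v) * f u := by
            rw [hT, Finset.sum_comm]
      _ = ∑ v : V, ∑ u : V, -(ω v u * phiP p (f v - f u) * f u) := by
            refine Finset.sum_congr rfl fun v _ => Finset.sum_congr rfl fun u _ => ?_
            rw [hωsymm v u, show f v - f u = -(f u - f v) by ring, phiP_neg]
            ring
      _ = -T2 := h2
  have hW : ∑ u : V, ∑ v : V, ω u v * |f u - f v| ^ p = T - T2 := by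
    rw [hT, hT2, ← Finset.sum_sub_distrib]
    refine Finset.sum_congr rfl fun u _ => ?_
    rw [← Finset.sum_sub_distrib]
    refine Finset.sum_congr rfl fun v _ => ?_
    rw [← phiP_mul_self hp (f u - f v)]
    ring
  have hsumall : T + ∑ u : V, κ u * |f u| ^ p = lam * DenQ ϱ p f := by
    rw [hT, DenQ, Finset.mul_sum, ← Finset.sum_add_distrib]
    exact Finset.sum_congr rfl fun u _ => hsum u
  rw [NumQ, hW]
  have : T - T2 = 2 * T := by rw [hTT2]; ring
  rw [this]
  linarith [hsumall]

set_option maxHeartbeats 1000000 in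
lemma perturb (hp : 1 < p) (hωsymm : ∀ u v, ω u v = ω v u)
    (hωpos : ∀ u v, G.Adj u v → 0 < ω u v)
    (hωzero : ∀ u v, ¬ G.Adj u v → ω u v = 0)
    (hϱpos : ∀ u, 0 < ϱ u) {lam1 : ℝ}
    (g : V → ℝ) (hgnn : ∀ u, 0 ≤ g u)
    (hNg : NumQ ω κ p g = lam1 * DenQ ϱ p g)
    (hlow : ∀ h : V → ℝ, h ≠ 0 → lam1 ≤ rayleigh ω κ ϱ p h)
    (u v0 : V) (hadj : G.Adj u v0) (hgu : g u = 0) (hgv0 : 0 < g v0) : False := by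
  classical
  have hp0 : p ≠ 0 := by linarith
  have hp1 : (0:ℝ) < p - 1 := by linarith
  have hωnn : ∀ a b, 0 ≤ ω a b := fun a b => by
    by_cases h : G.Adj a b
    · exact (hωpos a b h).le
    · exact (hωzero a b h).ge
  have hωuu : ω u u = 0 := hωzero u u (G.irrefl)
  set b := g v0 with hb
  set C1 : ℝ := ω u v0 * b ^ (p - 1) with hC1def
  have hC1 : 0 < C1 := mul_pos (hωpos u v0 hadj) (Real.rpow_pos_of_pos hgv0 _)
  set C2 : ℝ := (∑ v ∈ univ.erase v0, ω u v) + |κ u - lam1 * ϱ u| with hC2def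
  have hC2 : 0 ≤ C2 := add_nonneg (Finset.sum_nonneg fun v _ => hωnn u v) (abs_nonneg _)
  set C2' : ℝ := C2 + 1 with hC2'def
  have hC2' : 0 < C2' := by linarith
  set τ : ℝ := (C1 / (2 * C2')) ^ (1 / (p - 1)) with hτdef
  have hτ : 0 < τ := Real.rpow_pos_of_pos (by positivity) _
  set t : ℝ := min (b / 2) τ with htdef
  have ht : 0 < t := lt_min (by positivity) hτ
  have htb : t < b := lt_of_le_of_lt (min_le_left _ _) (by linarith)
  have htp : t ^ (p - 1) ≤ C1 / (2 * C2') := by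
    calc t ^ (p - 1) ≤ τ ^ (p - 1) :=
          Real.rpow_le_rpow ht.le (min_le_right _ _) hp1.le
      _ = C1 / (2 * C2') := by
          rw [hτdef, ← Real.rpow_mul (by positivity), one_div_mul_cancel hp1.ne',
            Real.rpow_one]
  set h : V → ℝ := Function.update g u t with hhdef
  have hhu : h u = t := Function.update_self u t g
  have hhv : ∀ v, v ≠ u → h v = g v := fun v hv => Function.update_of_ne hv t g
  set e : V → ℝ := fun v => ω u v * (|t - g v| ^ p - |g v| ^ p) with hedef
  have heu : e u = 0 := by rw [hedef]; simp [hωuu]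
  -- pointwise decomposition of edge energies
  have hpoint : ∀ a c : V, ω a c * |h a - h c| ^ p
      = ω a c * |g a - g c| ^ p + (if a = u then e c else 0) + (if c = u then e a else 0) := by
    intro a c
    by_cases ha : a = u <;> by_cases hc : c = u
    · rw [ha, hc]; simp [hωuu, heu]
    · subst ha
      rw [hhu, hhv c hc, if_pos rfl, if_neg hc, hedef]
      simp only [hgu, zero_sub, abs_neg]
      ring
    · rw [hc, hhu, hhv a ha, if_neg ha, if_pos rfl, hedef]
      simp only [hgu, sub_zero]
      rw [hωsymm a u, abs_sub_comm (g a) t]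
      ring
    · rw [hhv a ha, hhv c hc, if_neg ha, if_neg hc]
      ring
  have A1 : ∑ a : V, ∑ c : V, (if a = u then e c else 0) = ∑ c : V, e c := by
    rw [Finset.sum_comm]
    simp
  have A2 : ∑ a : V, ∑ c : V, (if c = u then e a else 0) = ∑ a : V, e a := by
    simp
  have hedge : ∑ a : V, ∑ c : V, ω a c * |h a - h c| ^ p
      = (∑ a : V, ∑ c : V, ω a c * |g a - g c| ^ p) + 2 * ∑ v : V, e v := by
    simp_rw [hpoint, Finset.sum_add_distrib]
    rw [A1, A2]
    ring
  -- potential and mass terms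
  have htpp : |t| ^ p = t ^ p := by rw [abs_of_pos ht]
  have hzero : |g u| ^ p = 0 := by rw [hgu, abs_zero, Real.zero_rpow hp0]
  have hkappa : ∑ a : V, κ a * |h a| ^ p = (∑ a : V, κ a * |g a| ^ p) + κ u * t ^ p := by
    have : ∀ a : V, κ a * |h a| ^ p = κ a * |g a| ^ p + (if a = u then κ u * t ^ p else 0) := by
      intro a
      by_cases ha : a = u
      · subst ha; rw [hhu, if_pos rfl, htpp, hzero]; ring
      · rw [hhv a ha, if_neg ha]; ring
    simp_rw [this, Finset.sum_add_distrib]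
    simp
  have hden : DenQ ϱ p h = DenQ ϱ p g + ϱ u * t ^ p := by
    unfold DenQ
    have : ∀ a : V, ϱ a * |h a| ^ p = ϱ a * |g a| ^ p + (if a = u then ϱ u * t ^ p else 0) := by
      intro a
      by_cases ha : a = u
      · subst ha; rw [hhu, if_pos rfl, htpp, hzero]; ring
      · rw [hhv a ha, if_neg ha]; ring
    simp_rw [this, Finset.sum_add_distrib]
    simp
  have hnum : NumQ ω κ p h = NumQ ω κ p g + (∑ v : V, e v) + κ u * t ^ p := by
    unfold NumQ
    rw [hedge, hkappa]
    ring
  -- key bound on the perturbation terms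
  have hev0 : e v0 ≤ -(C1 * t) := by
    have habs : |t - b| = b - t := by rw [abs_sub_comm, abs_of_pos (by linarith)]
    have hbt : (0:ℝ) < 1 - t / b := by
      rw [sub_pos, div_lt_one hgv0]; exact htb
    have hfac : b - t = b * (1 - t / b) := by field_simp
    have h1 : (b - t) ^ p ≤ b ^ p * (1 - t / b) := by
      rw [hfac, Real.mul_rpow hgv0.le hbt.le]
      have h2 : (1 - t / b) ^ p ≤ (1 - t / b) ^ (1:ℝ) := by
        apply Real.rpow_le_rpow_of_exponent_ge hbt
        · rw [sub_le_self_iff]; positivity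
        · linarith
      rw [Real.rpow_one] at h2
      exact mul_le_mul_of_nonneg_left h2 (Real.rpow_nonneg hgv0.le p)
    have h3 : b ^ p * (1 - t / b) = b ^ p - t * b ^ (p - 1) := by
      have hdiv : b ^ p * (t / b) = t * b ^ (p - 1) := by
        have : b ^ p = b ^ (p - 1) * b := by
          rw [show b ^ p = b ^ ((p-1)+1) by norm_num, Real.rpow_add hgv0, Real.rpow_one]
        rw [this]
        field_simp
      rw [mul_sub, mul_one, hdiv]
    have hbabs : |g v0| ^ p = b ^ p := by rw [← hb, abs_of_pos hgv0]
    rw [hedef]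
    simp only
    rw [← hb, habs, hbabs]
    calc ω u v0 * ((b - t) ^ p - b ^ p)
        ≤ ω u v0 * (b ^ p * (1 - t/b) - b ^ p) :=
          mul_le_mul_of_nonneg_left (by linarith) (hωnn u v0)
      _ = ω u v0 * (- (t * b ^ (p-1))) := by rw [h3]; ring
      _ = -(C1 * t) := by rw [hC1def]; ring
  have hev : ∀ v, e v ≤ ω u v * t ^ p := by
    intro v
    have h4 : |t - g v| ^ p - |g v| ^ p ≤ t ^ p := by
      rcases le_or_gt (g v) t with hgv | hgv
      · have : |t - g v| = t - g v := abs_of_nonneg (by linarith)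
        have h5 : |t - g v| ^ p ≤ t ^ p := by
          rw [this]
          exact Real.rpow_le_rpow (by linarith [hgnn v]) (by linarith [hgnn v]) (by linarith)
        have h6 : (0:ℝ) ≤ |g v| ^ p := Real.rpow_nonneg (abs_nonneg _) p
        linarith
      · have : |t - g v| = g v - t := by rw [abs_sub_comm]; exact abs_of_nonneg (by linarith)
        have h5 : |t - g v| ^ p ≤ |g v| ^ p := by
          rw [this, abs_of_nonneg (hgnn v)]
          exact Real.rpow_le_rpow (by linarith) (by linarith) (by linarith)
        have h6 : (0:ℝ) ≤ t ^ p := Real.rpow_nonneg ht.le p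
        linarith
    calc e v = ω u v * (|t - g v| ^ p - |g v| ^ p) := by rw [hedef]
      _ ≤ ω u v * t ^ p := mul_le_mul_of_nonneg_left h4 (hωnn u v)
  have hesum : ∑ v : V, e v ≤ -(C1 * t) + (∑ v ∈ univ.erase v0, ω u v) * t ^ p := by
    rw [← Finset.add_sum_erase univ e (mem_univ v0), Finset.sum_mul]
    exact add_le_add hev0 (Finset.sum_le_sum fun v _ => hev v)
  have htpf : t ^ p = t ^ (p - 1) * t := by
    rw [show t ^ p = t ^ ((p-1)+1) by norm_num, Real.rpow_add ht, Real.rpow_one]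
  have hkb : κ u * t ^ p - lam1 * (ϱ u * t ^ p) ≤ |κ u - lam1 * ϱ u| * t ^ p := by
    have h7 : κ u * t ^ p - lam1 * (ϱ u * t ^ p) = (κ u - lam1 * ϱ u) * t ^ p := by ring
    rw [h7]
    exact mul_le_mul_of_nonneg_right (le_abs_self _) (Real.rpow_nonneg ht.le p)
  have hC2t : C2 * t ^ p ≤ C1 / 2 * t := by
    rw [htpf, ← mul_assoc]
    apply mul_le_mul_of_nonneg_right _ ht.le
    calc C2 * t ^ (p - 1) ≤ C2' * (C1 / (2 * C2')) := by
          apply mul_le_mul (by linarith) htp (Real.rpow_nonneg ht.le _) hC2'.le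
      _ = C1 / 2 := by field_simp
  have hfinal : NumQ ω κ p h < lam1 * DenQ ϱ p h := by
    have expand : lam1 * DenQ ϱ p h = NumQ ω κ p g + lam1 * (ϱ u * t ^ p) := by
      rw [hden, mul_add, ← hNg]
    have hkey : (∑ v : V, e v) + (κ u * t ^ p - lam1 * (ϱ u * t ^ p)) ≤ -(C1 * t) + C2 * t ^ p := by
      calc (∑ v : V, e v) + (κ u * t ^ p - lam1 * (ϱ u * t ^ p))
          ≤ (-(C1 * t) + (∑ v ∈ univ.erase v0, ω u v) * t ^ p) + |κ u - lam1 * ϱ u| * t ^ p :=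
            add_le_add hesum hkb
        _ = -(C1 * t) + ((∑ v ∈ univ.erase v0, ω u v) + |κ u - lam1 * ϱ u|) * t ^ p := by ring
        _ = -(C1 * t) + C2 * t ^ p := by rw [hC2def]
    rw [hnum, expand]
    linarith [hkey, hC2t, mul_pos hC1 ht]
  have hDh : 0 < DenQ ϱ p h := by
    rw [hden]
    have h8 : 0 ≤ DenQ ϱ p g := Finset.sum_nonneg fun v _ =>
      mul_nonneg (hϱpos v).le (Real.rpow_nonneg (abs_nonneg (g v)) p)
    have h9 : 0 < ϱ u * t ^ p := mul_pos (hϱpos u) (Real.rpow_pos_of_pos ht p)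
    linarith
  have hh0 : h ≠ 0 := by
    intro hcon
    have : h u = 0 := by rw [hcon]; rfl
    rw [hhu] at this
    exact ht.ne' this
  have := hlow h hh0
  rw [rayleigh_eq] at this
  have hlt : NumQ ω κ p h / DenQ ϱ p h < lam1 := (div_lt_iff₀ hDh).mpr (by linarith [hfinal])
  linarith


/-- Propagate a property along walks. -/
lemma walk_prop {P : V → Prop} (hstep : ∀ a b, G.Adj a b → P a → P b) :
    ∀ {u v : V}, G.Walk u v → P u → P v := by
  intro u v w
  induction w with
  | nil => exact id
  | cons h q ih => exact fun hu => ih (hstep _ _ h hu)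

/-- Contact lemma: if `F ≤ G'` are eigenfunctions for the same eigenvalue that agree
at `u`, then they agree at each neighbour of `u`. -/
lemma contact (hp : 1 < p)
    (hωpos : ∀ u v, G.Adj u v → 0 < ω u v)
    (hωzero : ∀ u v, ¬ G.Adj u v → ω u v = 0)
    {lam : ℝ} {F G' : V → ℝ}
    (hF : ∀ u, genLap ω κ p F u = lam * (ϱ u * phiP p (F u)))
    (hG : ∀ u, genLap ω κ p G' u = lam * (ϱ u * phiP p (G' u)))
    (hle : ∀ v, F v ≤ G' v) {u v : V} (hu : F u = G' u) (hadj : G.Adj u v) :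
    F v = G' v := by
  have hωnn : ∀ a b, 0 ≤ ω a b := fun a b => by
    by_cases h : G.Adj a b
    · exact (hωpos a b h).le
    · exact (hωzero a b h).ge
  have hmono := (phiP_strictMono (p := p) hp).monotone
  have h1 : genLap ω κ p F u = genLap ω κ p G' u := by rw [hF u, hG u, hu]
  unfold genLap at h1
  rw [hu] at h1
  have hsum : ∑ w : V, (ω u w * phiP p (F u - F w) - ω u w * phiP p (G' u - G' w)) = 0 := by
    rw [Finset.sum_sub_distrib, hu]
    linarith [h1]
  have hnn : ∀ w ∈ Finset.univ,
      0 ≤ ω u w * phiP p (F u - F w) - ω u w * phiP p (G' u - G' w) := by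
    intro w _
    have h2 : G' u - G' w ≤ F u - F w := by
      have := hle w; rw [← hu]; linarith
    have h3 := hmono h2
    nlinarith [hωnn u w]
  have hz := (Finset.sum_eq_zero_iff_of_nonneg hnn).mp hsum v (Finset.mem_univ v)
  have hωv := hωpos u v hadj
  have heq : phiP p (F u - F v) = phiP p (G' u - G' v) := by
    have : ω u v * phiP p (F u - F v) = ω u v * phiP p (G' u - G' v) := by linarith
    exact mul_left_cancel₀ hωv.ne' this
  have h4 : F u - F v = G' u - G' v := (phiP_strictMono (p := p) hp).injective heq
  linarith [h4]

/-- Negating an eigenfunction gives an eigenfunction. -/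
lemma eig_neg {lam : ℝ} {f : V → ℝ} (hf : IsEigenpair ω κ ϱ p lam f) :
    IsEigenpair ω κ ϱ p lam (-f) := by
  refine ⟨neg_ne_zero.mpr hf.1, fun u => ?_⟩
  have h1 := hf.2 u
  unfold genLap at h1 ⊢
  simp only [Pi.neg_apply]
  have h2 : ∀ v : V, -f u - -f v = -(f u - f v) := fun v => by ring
  simp_rw [h2, phiP_neg, mul_neg, Finset.sum_neg_distrib]
  linarith [h1]

/-- Scaling an eigenfunction by a positive constant gives an eigenfunction. -/
lemma eig_smul (hp : 1 < p) {c : ℝ} (hc : 0 < c) {lam : ℝ} {f : V → ℝ}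
    (hf : IsEigenpair ω κ ϱ p lam f) : IsEigenpair ω κ ϱ p lam (c • f) := by
  refine ⟨smul_ne_zero hc.ne' hf.1, fun u => ?_⟩
  have h1 := hf.2 u
  unfold genLap at h1 ⊢
  simp only [Pi.smul_apply, smul_eq_mul]
  have h2 : ∀ v : V, c * f u - c * f v = c * (f u - f v) := fun v => by ring
  simp_rw [h2, phiP_const_mul hp hc]
  have h3 : ∑ v : V, ω u v * (c ^ (p-1) * phiP p (f u - f v))
      = c ^ (p-1) * ∑ v : V, ω u v * phiP p (f u - f v) := by
    rw [Finset.mul_sum]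
    exact Finset.sum_congr rfl fun v _ => by ring
  rw [h3]
  linear_combination (c ^ (p-1)) * h1

set_option maxHeartbeats 1000000 in
/-- Every eigenfunction of the first variational eigenvalue has a strict sign. -/
lemma first_eig_sign (hp : 1 < p) (hωsymm : ∀ u v, ω u v = ω v u)
    (hωpos : ∀ u v, G.Adj u v → 0 < ω u v)
    (hωzero : ∀ u v, ¬ G.Adj u v → ω u v = 0)
    (hϱpos : ∀ u, 0 < ϱ u)
    (hconn : G.Connected) {lam1 : ℝ}
    (hlam1 : IsLeast (rayleigh ω κ ϱ p '' pSphere V p) lam1)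
    {f : V → ℝ} (hf : IsEigenpair ω κ ϱ p lam1 f) :
    (∀ u, 0 < f u) ∨ (∀ u, f u < 0) := by
  classical
  have hωnn : ∀ a b, 0 ≤ ω a b := fun a b => by
    by_cases h : G.Adj a b
    · exact (hωpos a b h).le
    · exact (hωzero a b h).ge
  have hlow : ∀ h : V → ℝ, h ≠ 0 → lam1 ≤ rayleigh ω κ ϱ p h :=
    fun h hh => lam1_le_rayleigh hp hlam1 hh
  have hNf : NumQ ω κ p f = lam1 * DenQ ϱ p f := eig_num_eq hp hωsymm hf
  have hD : 0 < DenQ ϱ p f := denQ_pos hϱpos hf.1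
  set g : V → ℝ := fun u => |f u| with hgdef
  have hg0 : g ≠ 0 := by
    intro hcon
    apply hf.1
    funext u
    have : g u = 0 := congrFun hcon u
    exact abs_eq_zero.mp this
  have habsg : ∀ u, |g u| = |f u| := fun u => abs_abs (f u)
  have hDg : DenQ ϱ p g = DenQ ϱ p f :=
    Finset.sum_congr rfl fun u _ => by rw [habsg]
  have hterm : ∀ u v : V, ω u v * |g u - g v| ^ p ≤ ω u v * |f u - f v| ^ p := by
    intro u v
    refine mul_le_mul_of_nonneg_left ?_ (hωnn u v)
    exact Real.rpow_le_rpow (abs_nonneg _) (abs_abs_sub_abs_le_abs_sub _ _) (by linarith)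
  have hNg_le : NumQ ω κ p g ≤ NumQ ω κ p f := by
    unfold NumQ
    have h5 : ∑ u : V, ∑ v : V, ω u v * |g u - g v| ^ p
        ≤ ∑ u : V, ∑ v : V, ω u v * |f u - f v| ^ p :=
      Finset.sum_le_sum fun u _ => Finset.sum_le_sum fun v _ => hterm u v
    have h6 : ∑ u : V, κ u * |g u| ^ p = ∑ u : V, κ u * |f u| ^ p :=
      Finset.sum_congr rfl fun u _ => by rw [habsg]
    rw [h6]
    linarith
  have hlower : lam1 * DenQ ϱ p f ≤ NumQ ω κ p g := by
    have h7 := hlow g hg0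
    rw [rayleigh_eq, hDg] at h7
    exact (le_div_iff₀ hD).mp h7
  have hNgf : NumQ ω κ p g = NumQ ω κ p f := le_antisymm hNg_le (by rw [hNf]; exact hlower)
  have hteq : ∀ u v : V, ω u v * |g u - g v| ^ p = ω u v * |f u - f v| ^ p := by
    have h6 : ∑ u : V, κ u * |g u| ^ p = ∑ u : V, κ u * |f u| ^ p :=
      Finset.sum_congr rfl fun u _ => by rw [habsg]
    have hSeq : ∑ u : V, ∑ v : V, ω u v * |g u - g v| ^ p
        = ∑ u : V, ∑ v : V, ω u v * |f u - f v| ^ p := by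
      have := hNgf
      unfold NumQ at this
      rw [h6] at this
      linarith
    have h0 : ∑ u : V, ∑ v : V,
        (ω u v * |f u - f v| ^ p - ω u v * |g u - g v| ^ p) = 0 := by
      simp_rw [Finset.sum_sub_distrib]
      rw [hSeq]
      ring
    have h1 := (Finset.sum_eq_zero_iff_of_nonneg (fun u _ =>
      Finset.sum_nonneg fun v _ => sub_nonneg.mpr (hterm u v))).mp h0
    intro u v
    have h2 := (Finset.sum_eq_zero_iff_of_nonneg (fun v _ =>
      sub_nonneg.mpr (hterm u v))).mp (h1 u (Finset.mem_univ u)) v (Finset.mem_univ v)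
    linarith
  have hsign : ∀ u v : V, G.Adj u v → 0 ≤ f u * f v := by
    intro u v hadj
    by_contra hneg
    push_neg at hneg
    have hωp := hωpos u v hadj
    have habs : |g u - g v| ^ p = |f u - f v| ^ p := mul_left_cancel₀ hωp.ne' (hteq u v)
    have hbase : |g u - g v| = |f u - f v| := by
      rcases lt_trichotomy (|g u - g v|) (|f u - f v|) with h | h | h
      · exact absurd habs (ne_of_lt (Real.rpow_lt_rpow (abs_nonneg _) h (by linarith)))
      · exact h
      · exact absurd habs.symm (ne_of_lt (Real.rpow_lt_rpow (abs_nonneg _) h (by linarith)))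
    have hglt : |g u - g v| < |f u| + |f v| := by
      have hu0 : 0 < |f u| := abs_pos.mpr fun h => by rw [h] at hneg; simp at hneg
      have hv0 : 0 < |f v| := abs_pos.mpr fun h => by rw [h] at hneg; simp at hneg
      have : g u - g v = |f u| - |f v| := rfl
      rw [this, abs_sub_lt_iff]
      constructor <;> linarith
    rcases mul_neg_iff.mp hneg with ⟨h8, h9⟩ | ⟨h8, h9⟩
    · have : |f u - f v| = |f u| + |f v| := by
        rw [abs_of_pos (by linarith : (0:ℝ) < f u - f v), abs_of_pos h8, abs_of_neg h9]
        ring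
      linarith
    · have : |f u - f v| = |f u| + |f v| := by
        rw [abs_of_neg (by linarith : f u - f v < 0), abs_of_neg h8, abs_of_pos h9]
        ring
      linarith
  have hNumg : NumQ ω κ p g = lam1 * DenQ ϱ p g := by rw [hNgf, hDg]; exact hNf
  have hgzero : ∀ u, g u ≠ 0 := by
    by_contra hcon
    push_neg at hcon
    obtain ⟨u, hu⟩ := hcon
    have hallzero : ∀ v, g v = 0 := by
      intro v
      obtain ⟨w⟩ := hconn.preconnected u v
      refine walk_prop (P := fun x => g x = 0) ?_ w hu
      intro a b hadj ha
      by_contra hb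
      have hbpos : 0 < g b := lt_of_le_of_ne (abs_nonneg _) (Ne.symm hb)
      exact perturb hp hωsymm hωpos hωzero hϱpos g (fun z => abs_nonneg _)
        hNumg hlow a b hadj ha hbpos
    exact hg0 (funext hallzero)
  have hfne : ∀ u, f u ≠ 0 := fun u hu => hgzero u (by rw [hgdef]; simp [hu])
  have hVne : Nonempty V := hconn.nonempty
  obtain ⟨u0⟩ := hVne
  have hsteppos : ∀ a b, G.Adj a b → 0 < f a → 0 < f b := by
    intro a b hadj ha
    rcases (hfne b).lt_or_gt with h | h
    · nlinarith [hsign a b hadj]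
    · exact h
  have hstepneg : ∀ a b, G.Adj a b → f a < 0 → f b < 0 := by
    intro a b hadj ha
    rcases (hfne b).lt_or_gt with h | h
    · exact h
    · nlinarith [hsign a b hadj]
  rcases (hfne u0).lt_or_gt with h0 | h0
  · right
    intro v
    obtain ⟨w⟩ := hconn.preconnected u0 v
    exact walk_prop hstepneg w h0
  · left
    intro v
    obtain ⟨w⟩ := hconn.preconnected u0 v
    exact walk_prop hsteppos w h0

/-- Two everywhere-positive eigenfunctions for the same eigenvalue are proportional. -/
lemma eig_unique_pos (hp : 1 < p)
    (hωpos : ∀ u v, G.Adj u v → 0 < ω u v)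
    (hωzero : ∀ u v, ¬ G.Adj u v → ω u v = 0)
    (hconn : G.Connected) {lam : ℝ} {f g : V → ℝ}
    (hf : IsEigenpair ω κ ϱ p lam f) (hg : IsEigenpair ω κ ϱ p lam g)
    (hfpos : ∀ u, 0 < f u) (hgpos : ∀ u, 0 < g u) : ∃ c : ℝ, g = c • f := by
  classical
  have hVne : Nonempty V := hconn.nonempty
  obtain ⟨u0, -, hu0⟩ := Finset.exists_min_image Finset.univ (fun u => g u / f u)
    Finset.univ_nonempty
  set c : ℝ := g u0 / f u0 with hcdef
  have hcpos : 0 < c := div_pos (hgpos u0) (hfpos u0)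
  have hcf : IsEigenpair ω κ ϱ p lam (c • f) := eig_smul hp hcpos hf
  have hle : ∀ v, (c • f) v ≤ g v := by
    intro v
    have h1 := hu0 v (Finset.mem_univ v)
    have h2 : c * f v ≤ g v := (le_div_iff₀ (hfpos v)).mp h1
    simpa [smul_eq_mul] using h2
  have heq0 : (c • f) u0 = g u0 := by
    show c * f u0 = g u0
    rw [hcdef]
    exact div_mul_cancel₀ _ (hfpos u0).ne'
  have hall : ∀ v, (c • f) v = g v := by
    intro v
    obtain ⟨w⟩ := hconn.preconnected u0 v
    refine walk_prop (P := fun x => (c • f) x = g x) ?_ w heq0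
    intro a b hadj ha
    exact contact hp hωpos hωzero hcf.2 hg.2 hle ha hadj
  exact ⟨c, (funext hall).symm⟩

end AuxMain

/-- every eigenfunction of the first variational eigenvalue `λ₁` is strictly
positive everywhere or strictly negative everywhere, and `λ₁` is simple. -/
theorem stmt0 {V : Type*} [Fintype V]
    (G : SimpleGraph V) (ω : V → V → ℝ) (κ ϱ : V → ℝ) (p : ℝ) (hp : 1 < p)
    (hωsymm : ∀ u v, ω u v = ω v u)
    (hωpos : ∀ u v, G.Adj u v → 0 < ω u v)
    (hωzero : ∀ u v, ¬ G.Adj u v → ω u v = 0)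
    (hϱpos : ∀ u, 0 < ϱ u)
    (hconn : G.Connected)
    (lam1 : ℝ) (hlam1 : IsLeast (rayleigh ω κ ϱ p '' pSphere V p) lam1) :
    (∀ f : V → ℝ, IsEigenpair ω κ ϱ p lam1 f → (∀ u, 0 < f u) ∨ (∀ u, f u < 0)) ∧
    (∀ f g : V → ℝ, IsEigenpair ω κ ϱ p lam1 f → IsEigenpair ω κ ϱ p lam1 g →
      ∃ c : ℝ, g = c • f)  := by
  classical
  have sign : ∀ f : V → ℝ, IsEigenpair ω κ ϱ p lam1 f → (∀ u, 0 < f u) ∨ (∀ u, f u < 0) :=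
    fun f hf => first_eig_sign hp hωsymm hωpos hωzero hϱpos hconn hlam1 hf
  refine ⟨sign, ?_⟩
  intro f g hf hg
  have hVne : Nonempty V := hconn.nonempty
  rcases sign f hf with hfp | hfn <;> rcases sign g hg with hgp | hgn
  · exact eig_unique_pos hp hωpos hωzero hconn hf hg hfp hgp
  · obtain ⟨c, hc⟩ := eig_unique_pos hp hωpos hωzero hconn hf (eig_neg hg) hfp
      (fun u => by simpa using (hgn u))
    refine ⟨-c, ?_⟩
    have : g = -(c • f) := by rw [← hc]; simp
    rw [this, neg_smul]
  · obtain ⟨c, hc⟩ := eig_unique_pos hp hωpos hωzero hconn (eig_neg hf) hg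
      (fun u => by simpa using (hfn u)) hgp
    refine ⟨-c, ?_⟩
    rw [hc]
    funext u
    simp [neg_smul]
  · obtain ⟨c, hc⟩ := eig_unique_pos hp hωpos hωzero hconn (eig_neg hf) (eig_neg hg)
      (fun u => by simpa using (hfn u)) (fun u => by simpa using (hgn u))
    refine ⟨c, ?_⟩
    have : -g = c • (-f) := hc
    funext u
    have h1 := congrFun this u
    simp only [Pi.neg_apply, Pi.smul_apply, smul_eq_mul, mul_neg] at h1
    simp only [Pi.smul_apply, smul_eq_mul]
    linarith
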